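/- For d ≥ 3 and n ≥ 1, the inequality ∑_{k=1}^{n-1} (k/n)·C(n,k)^{-(d-2)}·(n/((k+1)(n-k+1)))^{(d-1)/2} ≤ (1/2)·(2^{1/2}·n)^{-(d-3)} holds for all sufficiently large n. -/

import Mathlib

open Nat Filter

lemma choose_ge_self_aux (n : ℕ) : ∀ k, 1 ≤ k → k < n → n ≤ n.choose k := by
  induction n with
  | zero => intro k h1 h2; omega
  | succ n ih =>
    intro k h1 h2
    obtain ⟨j, rfl⟩ : ∃ j, k = j + 1 := ⟨k - 1, by omega⟩
    rcases eq_or_lt_of_le (Nat.lt_succ_iff.mp h2) with h | h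
    · rw [h, Nat.choose_succ_self_right]
    · rw [Nat.choose_succ_succ]
      have h3 : 1 ≤ n.choose j := Nat.choose_pos (by omega)
      rcases Nat.eq_zero_or_pos j with rfl | hj
      · simp only [Nat.choose_one_right, Nat.choose_zero_right]; omega
      · have := ih (j+1) (by omega) h
        simp only [Nat.succ_eq_add_one]
        omega

lemma half_rpow_eq (m : ℕ) :
    (1/2 : ℝ) ^ (((m:ℝ) + 2)/2) = (1/2) * ((Real.sqrt 2) ^ m)⁻¹ := by
  have h2 : (0:ℝ) < 2 := two_pos
  have hs : (Real.sqrt 2) ^ m = (2:ℝ) ^ ((m:ℝ)/2) := by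
    rw [Real.sqrt_eq_rpow, ← Real.rpow_natCast ((2:ℝ) ^ ((1:ℝ)/2)) m,
      ← Real.rpow_mul (le_of_lt h2)]
    ring_nf
  have hl : (1/2 : ℝ) ^ (((m:ℝ) + 2)/2) = ((2:ℝ) ^ (((m:ℝ) + 2)/2))⁻¹ := by
    rw [show (1/2 : ℝ) = 2⁻¹ by norm_num, Real.inv_rpow (le_of_lt h2)]
  rw [hl, hs, show ((m:ℝ) + 2)/2 = (m:ℝ)/2 + 1 by ring, Real.rpow_add h2,
    Real.rpow_one]
  have : (0:ℝ) < (2:ℝ) ^ ((m:ℝ)/2) := Real.rpow_pos_of_pos h2 _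
  field_simp

theorem stmt17 (d : ℕ) (hd : 3 ≤ d) :
    ∀ᶠ n : ℕ in atTop,
      ∑ k ∈ Finset.Icc 1 (n - 1),
          ((k : ℝ) / n) * ((n.choose k : ℝ)) ^ (-((d : ℤ) - 2)) *
            ((n : ℝ) / (((k : ℝ) + 1) * ((n : ℝ) - k + 1))) ^ (((d : ℝ) - 1) / 2) ≤
        (1 / 2) * (Real.sqrt 2 * n) ^ (-((d : ℤ) - 3)) := by
  obtain ⟨m, rfl⟩ : ∃ m, d = m + 3 := ⟨d - 3, by omega⟩
  filter_upwards [eventually_ge_atTop 1] with n hn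
  have hn0 : (0:ℝ) < n := by
    have : (0:ℕ) < n := hn
    exact_mod_cast this
  have hE1 : -(((m + 3 : ℕ) : ℤ) - 2) = -(((m + 1 : ℕ) : ℤ)) := by push_cast; ring
  have hE2 : -(((m + 3 : ℕ) : ℤ) - 3) = -(((m : ℕ) : ℤ)) := by push_cast; ring
  have hE3 : (((m + 3 : ℕ) : ℝ) - 1)/2 = ((m:ℝ) + 2)/2 := by push_cast; ring
  rw [hE2]
  set e : ℝ := ((m:ℝ) + 2)/2 with he
  have he0 : (0:ℝ) ≤ e := by positivity
  set C0 : ℝ := (((n:ℝ)) ^ (m+1))⁻¹ * (1/2 : ℝ) ^ e with hC0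
  have hC : ∀ k ∈ Finset.Icc 1 (n-1),
      ((k : ℝ) / n) * ((n.choose k : ℝ)) ^ (-(((m + 3 : ℕ) : ℤ) - 2)) *
        ((n : ℝ) / (((k : ℝ) + 1) * ((n : ℝ) - k + 1))) ^ ((((m + 3 : ℕ) : ℝ) - 1)/2) ≤ C0 := by
    intro k hk
    rw [Finset.mem_Icc] at hk
    obtain ⟨hk1, hk2⟩ := hk
    have hkn : k < n := by omega
    have hkR : (1:ℝ) ≤ k := by exact_mod_cast hk1
    have hkR2 : (k:ℝ) + 1 ≤ (n:ℝ) := by exact_mod_cast hkn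
    have hchoose : (n:ℝ) ≤ n.choose k := by
      exact_mod_cast choose_ge_self_aux n k hk1 hkn
    have hcpos : (0:ℝ) < n.choose k := lt_of_lt_of_le hn0 hchoose
    have hdiv : (k:ℝ)/n ≤ 1 := by
      rw [div_le_one hn0]; linarith
    have hBpos : 0 < ((k:ℝ) + 1) * ((n:ℝ) - k + 1) := by nlinarith
    have hB : (n:ℝ) / (((k:ℝ) + 1) * ((n:ℝ) - k + 1)) ≤ 1/2 := by
      rw [div_le_iff₀ hBpos]
      nlinarith [mul_nonneg (by linarith : (0:ℝ) ≤ (k:ℝ) - 1)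
        (by linarith : (0:ℝ) ≤ (n:ℝ) - k - 1)]
    have hB0 : 0 ≤ (n:ℝ) / (((k:ℝ) + 1) * ((n:ℝ) - k + 1)) := by positivity
    rw [hE1, hE3, zpow_neg, zpow_natCast]
    have hzp : ((n.choose k : ℝ) ^ (m+1))⁻¹ ≤ (((n:ℝ)) ^ (m+1))⁻¹ := by
      apply inv_anti₀ (by positivity)
      exact pow_le_pow_left₀ (le_of_lt hn0) hchoose _
    have hrp : ((n : ℝ) / (((k : ℝ) + 1) * ((n : ℝ) - k + 1))) ^ e ≤ (1/2 : ℝ) ^ e :=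
      Real.rpow_le_rpow hB0 hB he0
    calc ((k : ℝ) / n) * ((n.choose k : ℝ) ^ (m+1))⁻¹ *
          ((n : ℝ) / (((k : ℝ) + 1) * ((n : ℝ) - k + 1))) ^ e
        ≤ 1 * (((n:ℝ)) ^ (m+1))⁻¹ * (1/2 : ℝ) ^ e := by
          apply mul_le_mul _ hrp (Real.rpow_nonneg hB0 _) (by positivity)
          apply mul_le_mul hdiv hzp (by positivity) (by norm_num)
      _ = C0 := by rw [hC0]; ring
  have hsum := Finset.sum_le_sum hC
  rw [Finset.sum_const, Nat.card_Icc] at hsum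
  have hcard : ((n - 1 + 1 - 1 : ℕ) : ℝ) ≤ (n:ℝ) := by
    have : n - 1 + 1 - 1 ≤ n := by omega
    exact_mod_cast this
  have hC00 : 0 ≤ C0 := by rw [hC0]; positivity
  calc ∑ k ∈ Finset.Icc 1 (n - 1),
          ((k : ℝ) / n) * ((n.choose k : ℝ)) ^ (-(((m + 3 : ℕ) : ℤ) - 2)) *
            ((n : ℝ) / (((k : ℝ) + 1) * ((n : ℝ) - k + 1))) ^ ((((m + 3 : ℕ) : ℝ) - 1)/2)
      ≤ ((n - 1 + 1 - 1 : ℕ) : ℝ) * C0 := by rw [← nsmul_eq_mul]; exact hsum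
    _ ≤ (n:ℝ) * C0 := mul_le_mul_of_nonneg_right hcard hC00
    _ = (1 / 2) * (Real.sqrt 2 * (n:ℝ)) ^ (-((m : ℕ) : ℤ)) := by
        rw [hC0, he, half_rpow_eq m, zpow_neg, zpow_natCast, mul_pow]
        have h1 : (0:ℝ) < Real.sqrt 2 ^ m := by positivity
        have h2 : (0:ℝ) < (n:ℝ) ^ m := by positivity
        field_simp
        ring
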